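/- If w is an element of a Coxeter group W and s is a simple reflection with ℓ(ws) < ℓ(w), then for every y < w in Bruhat order the Kazhdan–Lusztig polynomials satisfy P_{ys,w} = P_{y,w}. -/

import Mathlib

noncomputable section

open LaurentPolynomial

variable {B W : Type*} [Group W] {M : CoxeterMatrix B} (cs : CoxeterSystem M W)

/-- The Bruhat order on a Coxeter group: `y ≤ w` iff some reduced word for `w` has a
sublist which is a reduced word for `y`. -/
def BruhatLE (y w : W) : Prop :=
  ∃ l l' : List B, cs.IsReduced l ∧ cs.wordProd l = w ∧
    l'.Sublist l ∧ cs.IsReduced l' ∧ cs.wordProd l' = y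


namespace KLAux

local notation "L" => LaurentPolynomial ℤ

lemma mul_T_apply (f : L) (a n : ℤ) : (f * T a : L).coeff n = f.coeff (n - a) := by
  rw [show (T a : L) = AddMonoidAlgebra.single a (1:ℤ) from rfl,
    AddMonoidAlgebra.coeff_mul_single_apply, mul_one, sub_eq_add_neg]

lemma T_mul_apply (f : L) (a n : ℤ) : (T a * f : L).coeff n = f.coeff (n - a) := by
  rw [T_mul, mul_T_apply]

lemma single_apply' (m : ℤ) (c : ℤ) (n : ℤ) :
    (AddMonoidAlgebra.single m c : L).coeff n = if m = n then c else 0 :=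
  Finsupp.single_apply

lemma aeval_monomial_T2 (k : ℕ) (c : ℤ) :
    (Polynomial.aeval (T 2 : L) (Polynomial.monomial k c) : L)
      = AddMonoidAlgebra.single (2 * k : ℤ) c := by
  rw [Polynomial.aeval_monomial, T_pow]
  have h1 : (algebraMap ℤ L) c = C c := by
    rw [eq_intCast, ← map_intCast (C : ℤ →+* L), Int.cast_id]
  rw [h1, show ((k : ℤ) * 2) = (2 * k : ℤ) by ring]
  exact (single_eq_C_mul_T c (2 * k)).symm ▸ rfl

lemma aeval_T2_apply_even (p : Polynomial ℤ) (k : ℕ) :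
    (Polynomial.aeval (T 2 : L) p : L).coeff (2 * k) = p.coeff k := by
  induction p using Polynomial.induction_on' with
  | add p q hp hq =>
    rw [map_add, Polynomial.coeff_add, ← hp, ← hq]
    rw [AddMonoidAlgebra.coeff_add, Finsupp.add_apply]
  | monomial n a =>
    rw [aeval_monomial_T2, single_apply', Polynomial.coeff_monomial]
    by_cases h : n = k
    · simp [h]
    · have : (2 * (n:ℤ) ≠ 2 * (k:ℤ)) := by
        intro hh; exact h (by exact_mod_cast (by omega : (n:ℤ) = k))
      simp [this, h]

lemma aeval_T2_apply_ne (p : Polynomial ℤ) (n : ℤ)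
    (h : (Polynomial.aeval (T 2 : L) p : L).coeff n ≠ 0) :
    ∃ k : ℕ, n = 2 * k := by
  induction p using Polynomial.induction_on' generalizing n with
  | add p q hp hq =>
    rw [map_add] at h
    have : (Polynomial.aeval (T 2 : L) p : L).coeff n ≠ 0 ∨
        (Polynomial.aeval (T 2 : L) q : L).coeff n ≠ 0 := by
      by_contra hc
      push_neg at hc
      apply h
      have h2 : (Polynomial.aeval (T 2 : L) p + Polynomial.aeval (T 2 : L) q).coeff n
          = (Polynomial.aeval (T 2 : L) p).coeff n + (Polynomial.aeval (T 2 : L) q).coeff n :=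
        Finsupp.add_apply _ _ _
      rw [h2, hc.1, hc.2, add_zero]
    rcases this with h' | h'
    · exact hp n h'
    · exact hq n h'
  | monomial m a =>
    rw [aeval_monomial_T2, single_apply'] at h
    by_cases hmn : (2 * (m:ℤ)) = n
    · exact ⟨m, hmn.symm⟩
    · simp [hmn] at h

lemma aeval_T2_supp (p : Polynomial ℤ) (n : ℤ)
    (h : (Polynomial.aeval (T 2 : L) p : L).coeff n ≠ 0) :
    0 ≤ n ∧ n ≤ 2 * p.natDegree := by
  obtain ⟨k, rfl⟩ := aeval_T2_apply_ne p n h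
  rw [aeval_T2_apply_even] at h
  have := Polynomial.le_natDegree_of_ne_zero h
  constructor <;> [positivity; exact_mod_cast by omega]

lemma aeval_T2_injective (p q : Polynomial ℤ)
    (h : (Polynomial.aeval (T 2 : L) p : L) = Polynomial.aeval (T 2 : L) q) : p = q := by
  ext k
  have := congrArg (fun f : L => f.coeff (2 * k)) h
  simpa only [aeval_T2_apply_even] using this

lemma T2_mul_cancel (f g : L) (h : T 2 * f = T 2 * g) : f = g := by
  have := congrArg (fun x => (T (-2) : L) * x) h
  simpa [← mul_assoc, ← T_add] using this


end KLAux

namespace KLAux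
open CoxeterSystem List
variable {B W : Type*} [Group W] {M : CoxeterMatrix B} (cs : CoxeterSystem M W)


local instance (priority := low) : DecidableEq W := Classical.decEq W

def sigmaFun (i : B) : W × ℤˣ → W × ℤˣ :=
  fun x => (cs.simple i * x.1 * cs.simple i, (if x.1 = cs.simple i then -1 else 1) * x.2)

lemma conj_conj (i : B) (x : W) :
    cs.simple i * (cs.simple i * x * cs.simple i) * cs.simple i = x := by
  simp [mul_assoc, cs.simple_mul_simple_self, cs.simple_mul_simple_cancel_left]

lemma conj_eq_simple_iff (i : B) (x : W) :
    cs.simple i * x * cs.simple i = cs.simple i ↔ x = cs.simple i := by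
  constructor
  · intro h
    have := congrArg (fun z => cs.simple i * z * cs.simple i) h
    simpa [conj_conj, cs.simple_mul_simple_cancel_left] using this
  · rintro rfl
    simp [cs.simple_mul_simple_self]

lemma sigmaFun_invol (i : B) : Function.Involutive (sigmaFun cs i) := by
  intro x
  obtain ⟨t, ε⟩ := x
  simp only [sigmaFun]
  refine Prod.ext (conj_conj cs i t) ?_
  simp only
  simp only [conj_eq_simple_iff]
  by_cases h : t = cs.simple i <;> simp [h]

def sigma (i : B) : Equiv.Perm (W × ℤˣ) :=
  ⟨sigmaFun cs i, sigmaFun cs i, sigmaFun_invol cs i, sigmaFun_invol cs i⟩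

@[simp] lemma sigma_apply (i : B) (t : W) (ε : ℤˣ) :
    sigma cs i (t, ε) = (cs.simple i * t * cs.simple i,
      (if t = cs.simple i then -1 else 1) * ε) := rfl

/-- sign helper for the dihedral computation. -/
def gsgn (i j : B) (t : W) (a : ℕ) : ℤˣ :=
  if t = (cs.simple j * cs.simple i) ^ a * cs.simple j then -1 else 1

lemma shift_cond (i j : B) (t : W) (a : ℕ) :
    (cs.simple i * cs.simple j) * t * (cs.simple j * cs.simple i)
        = (cs.simple j * cs.simple i) ^ a * cs.simple j
      ↔ t = (cs.simple j * cs.simple i) ^ (a + 2) * cs.simple j := by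
  set p := cs.simple i * cs.simple j with hp
  set p' := cs.simple j * cs.simple i with hp'
  have hp'inv : p' = p⁻¹ := by
    apply eq_inv_of_mul_eq_one_left
    rw [hp, hp', mul_assoc, ← mul_assoc (cs.simple i), cs.simple_mul_simple_self, one_mul,
      cs.simple_mul_simple_self]
  have hcomm : cs.simple j * p = p' * cs.simple j := by rw [hp, hp']; group
  have key : p' * (p' ^ a * cs.simple j) * p = p' ^ (a + 2) * cs.simple j := by
    calc p' * (p' ^ a * cs.simple j) * p
        = (p' * p' ^ a) * (cs.simple j * p) := by group
      _ = (p' * p' ^ a) * (p' * cs.simple j) := by rw [hcomm]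
      _ = p' ^ (a + 1) * (p' * cs.simple j) := by rw [← pow_succ']
      _ = (p' ^ (a + 1) * p') * cs.simple j := (mul_assoc _ _ _).symm
      _ = p' ^ (a + 2) * cs.simple j := by rw [← pow_succ]
  have hpp' : p * p' = 1 := by rw [hp'inv, mul_inv_cancel]
  constructor
  · intro h
    have ht : t = p' * (p' ^ a * cs.simple j) * p := by
      have h2 : t = p⁻¹ * (p' ^ a * cs.simple j) * p'⁻¹ := by rw [← h]; group
      rw [h2, ← hp'inv, hp'inv, inv_inv]
    rw [ht, key]
  · intro h
    rw [h, ← key]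
    calc p * (p' * (p' ^ a * cs.simple j) * p) * p'
        = (p * p') * (p' ^ a * cs.simple j) * (p * p') := by group
      _ = p' ^ a * cs.simple j := by rw [hpp', one_mul, mul_one]

lemma sigma_mul_pow (i j : B) (n : ℕ) (t : W) (ε : ℤˣ) :
    ((sigma cs i * sigma cs j) ^ n) (t, ε) =
      ((cs.simple i * cs.simple j) ^ n * t * (cs.simple j * cs.simple i) ^ n,
        (∏ k ∈ Finset.range n, (gsgn cs i j t (2 * k) * gsgn cs i j t (2 * k + 1))) * ε) := by
  induction n generalizing t ε with
  | zero => simp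
  | succ n ih =>
    rw [pow_succ, Equiv.Perm.mul_apply]
    have hiff1 : (cs.simple j * t * cs.simple j = cs.simple i)
        ↔ t = (cs.simple j * cs.simple i) ^ 1 * cs.simple j := by
      rw [pow_one]
      constructor
      · intro h
        have h2 := congrArg (fun z => cs.simple j * z * cs.simple j) h
        rw [conj_conj] at h2
        rw [h2]
      · intro h
        rw [h]
        calc cs.simple j * (cs.simple j * cs.simple i * cs.simple j) * cs.simple j
            = (cs.simple j * cs.simple j) * cs.simple i * (cs.simple j * cs.simple j) := by
              group
          _ = cs.simple i := by rw [cs.simple_mul_simple_self]; group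
    have hτ : ((sigma cs i * sigma cs j) (t, ε)) =
        ((cs.simple i * cs.simple j) * t * (cs.simple j * cs.simple i),
          (gsgn cs i j t 0 * gsgn cs i j t 1) * ε) := by
      rw [Equiv.Perm.mul_apply, sigma_apply, sigma_apply]
      refine Prod.ext (by group) ?_
      simp only
      rw [if_congr hiff1 rfl rfl]
      have h1 : (if t = cs.simple j then (-1:ℤˣ) else 1) = gsgn cs i j t 0 := by
        simp [gsgn]
      rw [h1]
      unfold gsgn
      simp only [← mul_assoc]
      rw [mul_comm (if t = (cs.simple j * cs.simple i) ^ 1 * cs.simple j then (-1:ℤˣ) else 1)]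
    rw [hτ, ih]
    set p := cs.simple i * cs.simple j with hp
    set p' := cs.simple j * cs.simple i with hp'
    refine Prod.ext ?_ ?_
    · simp only
      calc p ^ n * (p * t * p') * p' ^ n = (p ^ n * p) * t * (p' * p' ^ n) := by group
        _ = p ^ (n+1) * t * p' ^ (n+1) := by rw [← pow_succ, ← pow_succ']
    · simp only
      have hshift : ∀ k : ℕ, gsgn cs i j (p * t * p') k = gsgn cs i j t (k + 2) := by
        intro k
        unfold gsgn
        rw [if_congr (shift_cond cs i j t k) rfl rfl]
      have hprod : (∏ k ∈ Finset.range n,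
            (gsgn cs i j (p * t * p') (2 * k) * gsgn cs i j (p * t * p') (2 * k + 1)))
          = ∏ k ∈ Finset.range n,
            (gsgn cs i j t (2 * (k+1)) * gsgn cs i j t (2 * (k+1) + 1)) := by
        refine Finset.prod_congr rfl fun k _ => ?_
        rw [hshift, hshift, show 2 * k + 2 = 2 * (k + 1) by ring,
          show 2 * k + 1 + 2 = 2 * (k + 1) + 1 by ring]
      rw [hprod, Finset.prod_range_succ']
      have h00 : gsgn cs i j t (2 * 0) * gsgn cs i j t (2 * 0 + 1)
          = gsgn cs i j t 0 * gsgn cs i j t 1 := by norm_num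
      rw [h00]
      group

lemma sigma_liftable : CoxeterMatrix.IsLiftable M (fun i => sigma cs i) := by
  intro i j
  refine Equiv.ext fun x => ?_
  obtain ⟨t, ε⟩ := x
  have h := sigma_mul_pow cs i j (M i j) t ε
  rw [cs.simple_mul_simple_pow i j, cs.simple_mul_simple_pow' i j] at h
  have hsgn : (∏ k ∈ Finset.range (M i j),
      (gsgn cs i j t (2 * k) * gsgn cs i j t (2 * k + 1))) = 1 := by
    have hdouble : ∀ m : ℕ, (∏ k ∈ Finset.range m,
        (gsgn cs i j t (2 * k) * gsgn cs i j t (2 * k + 1)))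
        = ∏ a ∈ Finset.range (2 * m), gsgn cs i j t a := by
      intro m
      induction m with
      | zero => simp
      | succ m ihm =>
        rw [Finset.prod_range_succ, ihm, show 2 * (m + 1) = 2 * m + 1 + 1 by ring,
          Finset.prod_range_succ, Finset.prod_range_succ, mul_assoc]
    rw [hdouble, two_mul, Finset.prod_range_add]
    have hper : ∀ a : ℕ, gsgn cs i j t (M i j + a) = gsgn cs i j t a := by
      intro a
      unfold gsgn
      rw [pow_add, cs.simple_mul_simple_pow' i j, one_mul]
    simp only [hper]
    exact Int.units_mul_self _
  rw [hsgn, one_mul] at h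
  simpa using h

def rho : W →* Equiv.Perm (W × ℤˣ) :=
  cs.lift ⟨fun i => sigma cs i, sigma_liftable cs⟩

lemma rho_simple (i : B) : rho cs (cs.simple i) = sigma cs i :=
  cs.lift_apply_simple (sigma_liftable cs) i

lemma rho_eq (ω : List B) (t : W) (ε : ℤˣ) :
    rho cs (cs.wordProd ω)⁻¹ (t, ε) =
      ((cs.wordProd ω)⁻¹ * t * cs.wordProd ω,
       (-1:ℤˣ) ^ (List.count ((cs.wordProd ω)⁻¹ * t * cs.wordProd ω) (cs.rightInvSeq ω)) * ε) := by
  induction ω generalizing t ε with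
  | nil => simp
  | cons i ω ih =>
    have hris : cs.rightInvSeq (i :: ω)
        = ((cs.wordProd ω)⁻¹ * cs.simple i * cs.wordProd ω) :: cs.rightInvSeq ω := rfl
    rw [cs.wordProd_cons, hris]
    set v := cs.wordProd ω with hv
    have hinv2 : (cs.simple i * v)⁻¹ = v⁻¹ * cs.simple i := by
      rw [mul_inv_rev, cs.inv_simple]
    rw [hinv2, map_mul, Equiv.Perm.mul_apply, rho_simple, sigma_apply, ih]
    have hcomp : v⁻¹ * (cs.simple i * t * cs.simple i) * v
        = v⁻¹ * cs.simple i * t * (cs.simple i * v) := by group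
    have hiff : (v⁻¹ * cs.simple i * t * (cs.simple i * v) = v⁻¹ * cs.simple i * v)
        ↔ t = cs.simple i := by
      constructor
      · intro h
        have hfree : (v⁻¹ * cs.simple i)⁻¹ * (v⁻¹ * cs.simple i * v) * (cs.simple i * v)⁻¹
            = (cs.simple i)⁻¹ := by group
        have h2 : t = (v⁻¹ * cs.simple i)⁻¹ * (v⁻¹ * cs.simple i * v) * (cs.simple i * v)⁻¹ := by
          rw [← h]; group
        rw [h2, hfree, cs.inv_simple]
      · rintro rfl
        calc v⁻¹ * cs.simple i * cs.simple i * (cs.simple i * v)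
            = v⁻¹ * (cs.simple i * (cs.simple i * cs.simple i)) * v := by group
          _ = v⁻¹ * cs.simple i * v := by rw [cs.simple_mul_simple_self, mul_one]
    refine Prod.ext ?_ ?_
    · simp only
      rw [hcomp]
    · simp only
      rw [hcomp, List.count_cons]
      simp only [beq_iff_eq]
      rw [if_congr (eq_comm.trans hiff) rfl rfl]
      by_cases ht : t = cs.simple i
      · rw [if_pos ht, if_pos ht, pow_add, pow_one]
        group
      · rw [if_neg ht, if_neg ht, add_zero, one_mul]

lemma count_parity (ω ω' : List B) (h : cs.wordProd ω = cs.wordProd ω') (u : W) :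
    (-1:ℤˣ) ^ (List.count u (cs.rightInvSeq ω))
      = (-1:ℤˣ) ^ (List.count u (cs.rightInvSeq ω')) := by
  set w := cs.wordProd ω with hw
  have hu : ∀ l : List B, cs.wordProd l = w →
      rho cs w⁻¹ (w * u * w⁻¹, 1)
        = (w⁻¹ * (w * u * w⁻¹) * w,
            (-1:ℤˣ) ^ (List.count (w⁻¹ * (w * u * w⁻¹) * w) (cs.rightInvSeq l)) * 1) := by
    intro l hl
    rw [← hl]
    exact rho_eq cs l (cs.wordProd l * u * (cs.wordProd l)⁻¹) 1
  have h1 := hu ω rfl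
  have h2 := hu ω' h.symm
  have h3 := h1.symm.trans h2
  have h4 := congrArg Prod.snd h3
  simp only at h4
  have hcu : w⁻¹ * (w * u * w⁻¹) * w = u := by group
  rw [hcu] at h4
  simpa using h4
end KLAux

namespace KLAux2
open KLAux
variable {B W : Type*} [Group W] {M : CoxeterMatrix B} (cs : CoxeterSystem M W)

local instance (priority := low) : DecidableEq W := Classical.decEq W

lemma simple_mem_rightInvSeq (w : W) (i : B) (hd : cs.IsRightDescent w i)
    (l : List B) (hlred : cs.IsReduced l) (hlw : cs.wordProd l = w) :
    cs.simple i ∈ cs.rightInvSeq l := by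
  obtain ⟨κ, hκred, hκ⟩ := cs.exists_reduced_word' (w * cs.simple i)
  have hωw : cs.wordProd (κ.concat i) = w := by
    rw [cs.wordProd_concat, ← hκ, cs.simple_mul_simple_cancel_right]
  have hpar := count_parity cs l (κ.concat i) (by rw [hlw, hωw]) (cs.simple i)
  have hcount : List.count (cs.simple i) (cs.rightInvSeq (κ.concat i)) = 1 := by
    rw [cs.rightInvSeq_concat]
    rw [List.concat_eq_append, List.count_append]
    have hnotmem : cs.simple i ∉ cs.rightInvSeq κ := by
      intro hmem
      have hinv := (cs.isRightInversion_of_mem_rightInvSeq hκred hmem).2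
      rw [← hκ, cs.simple_mul_simple_cancel_right] at hinv
      exact absurd hinv (not_lt.mpr (le_of_lt hd))
    have hmap : List.count (cs.simple i) (List.map (⇑(MulAut.conj (cs.simple i)))
        (cs.rightInvSeq κ)) = 0 := by
      rw [List.count_eq_zero]
      intro hmem
      obtain ⟨x, hx, hfx⟩ := List.mem_map.mp hmem
      rw [MulAut.conj_apply, cs.inv_simple] at hfx
      have hxi : x = cs.simple i := (conj_eq_simple_iff cs i x).mp hfx
      exact hnotmem (hxi ▸ hx)
    rw [hmap, zero_add]
    simp
  rw [hcount, pow_one] at hpar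
  by_contra hnm
  rw [List.count_eq_zero_of_not_mem hnm, pow_zero] at hpar
  exact absurd hpar (by decide)

lemma bruhatLE_refl (w : W) : BruhatLE cs w w := by
  obtain ⟨l, hred, hl⟩ := cs.exists_reduced_word' w
  exact ⟨l, l, hred, hl.symm, List.Sublist.refl l, hred, hl.symm⟩

lemma bruhatLE_length_le {y w : W} (h : BruhatLE cs y w) : cs.length y ≤ cs.length w := by
  obtain ⟨l, l', hred, hl, hsub, hred', hl'⟩ := h
  rw [← hl, ← hl', hred, hred']
  exact hsub.length_le

lemma bruhatLE_eq_of_length {y w : W} (h : BruhatLE cs y w)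
    (hlen : cs.length y = cs.length w) : y = w := by
  obtain ⟨l, l', hred, hl, hsub, hred', hl'⟩ := h
  have : l' = l := hsub.eq_of_length (by rw [← hred, ← hred', hl, hl', hlen])
  rw [← hl, ← hl', this]

lemma isReduced_of_concat_reduced {l : List B} {k : B} (h : cs.IsReduced (l.concat k)) :
    cs.IsReduced l := by
  have h1 : cs.length (cs.wordProd (l.concat k)) = l.length + 1 := by
    rw [h]; simp
  have h2 : cs.wordProd (l.concat k) = cs.wordProd l * cs.simple k := cs.wordProd_concat k l
  have h3 : cs.length (cs.wordProd l) ≤ l.length := cs.length_wordProd_le l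
  have h4 : l.length + 1 ≤ cs.length (cs.wordProd l) + 1 := by
    have h5 := cs.length_mul_le (cs.wordProd l) (cs.simple k)
    have h6 := cs.length_simple k
    rw [← h2] at h5
    omega
  unfold CoxeterSystem.IsReduced
  omega

lemma bruhatLE_finite : ∀ (n : ℕ) (w : W), cs.length w ≤ n → {y | BruhatLE cs y w}.Finite := by
  intro n
  induction n with
  | zero =>
    intro w hw
    apply Set.Finite.subset (Set.finite_singleton (1 : W))
    rintro y ⟨l, l', hred, hl, hsub, hred', hl'⟩
    have hl0 : l = [] := by
      have : l.length = 0 := by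
        rw [← hred, hl]
        omega
      exact List.length_eq_zero_iff.mp this
    have : l' = [] := List.sublist_nil.mp (hl0 ▸ hsub)
    simp [← hl', this]
  | succ n ih =>
    intro w hw
    by_cases hw1 : cs.length w ≤ n
    · exact ih w hw1
    have hlen : cs.length w = n + 1 := by omega
    obtain ⟨l₀, hl₀red, hl₀⟩ := cs.exists_reduced_word' w
    set V : Set W := {v | cs.length v < cs.length w ∧ ∃ i : B, v = w * cs.simple i} with hV
    have hVfin : V.Finite := by
      apply Set.Finite.subset (Set.Finite.image (fun t => w * t)
        (List.finite_toSet (cs.rightInvSeq l₀)))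
      rintro v ⟨hvlen, i, rfl⟩
      have hdesc : cs.IsRightDescent w i := hvlen
      refine ⟨cs.simple i, ?_, rfl⟩
      exact simple_mem_rightInvSeq cs w i hdesc l₀ hl₀red hl₀.symm
    have key : {y | BruhatLE cs y w} ⊆
        ⋃ v ∈ V, ({y | BruhatLE cs y v} ∪ (fun z => z * (w⁻¹ * v)) '' {y | BruhatLE cs y v}) := by
      rintro y ⟨m, nn, hmred, hm, hsub, hnred, hn⟩
      have hmne : m ≠ [] := by
        rintro rfl
        rw [cs.wordProd_nil] at hm
        rw [← hm] at hlen
        simp at hlen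
      obtain ⟨m₀, k, rfl⟩ := (List.eq_nil_or_concat m).resolve_left hmne
      have hm₀red : cs.IsReduced m₀ := isReduced_of_concat_reduced cs hmred
      have hvdef : cs.wordProd m₀ = w * cs.simple k := by
        rw [← hm, cs.wordProd_concat, cs.simple_mul_simple_cancel_right]
      set v := cs.wordProd m₀ with hv
      have hvV : v ∈ V := by
        refine ⟨?_, k, hvdef⟩
        have : cs.length v = m₀.length := hm₀red
        have h2 : m₀.length < (m₀.concat k).length := by simp
        have h3 : (m₀.concat k).length = cs.length w := by rw [← hm, hmred]
        omega
      have hwv : w⁻¹ * v = cs.simple k := by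
        rw [hvdef, ← mul_assoc, inv_mul_cancel, one_mul]
      apply Set.mem_biUnion hvV
      rw [List.concat_eq_append] at hsub
      obtain ⟨x, yy, rfl, hx, hy⟩ := List.sublist_append_iff.mp hsub
      rcases List.sublist_singleton.mp hy with rfl | rfl
      · left
        simp only [List.append_nil] at hnred hn
        exact ⟨m₀, x, hm₀red, rfl, hx, hnred, hn⟩
      · right
        have hxred : cs.IsReduced x := isReduced_of_concat_reduced cs
          (by rw [List.concat_eq_append]; exact hnred)
        refine ⟨cs.wordProd x, ⟨m₀, x, hm₀red, rfl, hx, hxred, rfl⟩, ?_⟩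
        simp only
        rw [hwv, ← hn, cs.wordProd_append]
        simp [cs.wordProd_singleton]
    apply Set.Finite.subset _ key
    apply Set.Finite.biUnion hVfin
    rintro v ⟨hvlen, -⟩
    have hfin := ih v (by omega)
    exact hfin.union (hfin.image _)


end KLAux2

namespace KLAux3
open KLAux

local notation "L" => LaurentPolynomial ℤ

variable {B W : Type*} [Group W] {M : CoxeterMatrix B} (cs : CoxeterSystem M W)
variable {H : Type*} [Ring H] [Algebra (LaurentPolynomial ℤ) H] (Tb : W → H)

lemma bar_smul_L (bar : H → H) (hbar_add : ∀ x y : H, bar (x + y) = bar x + bar y)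
    (hbar_smul : ∀ (n : ℤ) (x : H),
      bar ((T n : L) • x) = (T (-n) : L) • bar x)
    (f : L) (h : H) :
    bar (f • h) = (invert f) • bar h := by
  have hzs : ∀ (c : ℤ) (z : H), bar (c • z) = c • bar z := fun c z =>
    map_zsmul (AddMonoidHom.mk' bar hbar_add) c z
  induction f using LaurentPolynomial.induction_on' with
  | add p q hp hq => rw [add_smul, hbar_add, hp, hq, map_add, add_smul]
  | C_mul_T n a =>
    have hC : (C a : L) = ((a : L)) := eq_intCast C a
    rw [map_mul, invert_C, invert_T, mul_smul, mul_smul, hC,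
      Int.cast_smul_eq_zsmul, Int.cast_smul_eq_zsmul, hzs, hbar_smul]

def lowSpan (n : ℕ) : Submodule L H := Submodule.span L (Tb '' {u : W | cs.length u < n})

lemma lowSpan_mono {m n : ℕ} (h : m ≤ n) : lowSpan cs Tb m ≤ lowSpan cs Tb n :=
  Submodule.span_mono (Set.image_mono fun _ hu => lt_of_lt_of_le hu h)

lemma Tb_mem_lowSpan {u : W} {n : ℕ} (h : cs.length u < n) : Tb u ∈ lowSpan cs Tb n :=
  Submodule.subset_span (Set.mem_image_of_mem Tb h)

lemma lowSpan_mul_simple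
    (hTmul_asc : ∀ (w : W) (i : B), cs.length w < cs.length (w * cs.simple i) →
      Tb w * Tb (cs.simple i) = Tb (w * cs.simple i))
    (hTmul_desc : ∀ (w : W) (i : B), cs.length (w * cs.simple i) < cs.length w →
      Tb w * Tb (cs.simple i) =
        ((T 2 - 1 : L)) • Tb w + ((T 2 : L)) • Tb (w * cs.simple i))
    {n : ℕ} {h : H} (hh : h ∈ lowSpan cs Tb n) (i : B) :
    h * Tb (cs.simple i) ∈ lowSpan cs Tb (n + 1) := by
  induction hh using Submodule.span_induction with
  | mem x hx =>
    obtain ⟨u, hu, rfl⟩ := hx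
    have hu' : cs.length u < n := hu
    rcases cs.length_mul_simple u i with hasc | hdesc
    · rw [hTmul_asc u i (by omega)]
      exact Tb_mem_lowSpan cs Tb (by omega)
    · rw [hTmul_desc u i (by omega)]
      exact Submodule.add_mem _
        (Submodule.smul_mem _ _ (Tb_mem_lowSpan cs Tb (by omega)))
        (Submodule.smul_mem _ _ (Tb_mem_lowSpan cs Tb (by omega)))
  | zero => rw [zero_mul]; exact Submodule.zero_mem _
  | add x y hx hy ihx ihy => rw [add_mul]; exact Submodule.add_mem _ ihx ihy
  | smul a x hx ih => rw [smul_mul_assoc]; exact Submodule.smul_mem _ _ ih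

lemma bar_Tb_expansion
    (hT1 : Tb 1 = 1)
    (hTmul_asc : ∀ (w : W) (i : B), cs.length w < cs.length (w * cs.simple i) →
      Tb w * Tb (cs.simple i) = Tb (w * cs.simple i))
    (hTmul_desc : ∀ (w : W) (i : B), cs.length (w * cs.simple i) < cs.length w →
      Tb w * Tb (cs.simple i) =
        ((T 2 - 1 : L)) • Tb w + ((T 2 : L)) • Tb (w * cs.simple i))
    (bar : H → H)
    (hbar_mul : ∀ x y : H, bar (x * y) = bar x * bar y)
    (hbar_one : bar 1 = 1)
    (hbar_simple : ∀ i : B,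
      bar (Tb (cs.simple i)) =
        (T (-2) : L) • Tb (cs.simple i) + ((T (-2) - 1 : L)) • (1 : H)) :
    ∀ x : W, bar (Tb x) - (T (-(2 * (cs.length x : ℤ))) : L) • Tb x
      ∈ lowSpan cs Tb (cs.length x) := by
  suffices hn : ∀ (n : ℕ) (x : W), cs.length x = n →
      bar (Tb x) - (T (-(2 * (cs.length x : ℤ))) : L) • Tb x ∈ lowSpan cs Tb (cs.length x) by
    intro x; exact hn (cs.length x) x rfl
  intro n
  induction n using Nat.strong_induction_on with
  | _ n ih =>
    intro x hx
    rcases Nat.eq_zero_or_pos n with h0 | hpos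
    · subst h0
      have hx1 : x = 1 := cs.length_eq_zero_iff.mp hx
      subst hx1
      rw [hT1, hbar_one, cs.length_one]
      norm_num
    · have hne : x ≠ 1 := by
        intro h1; rw [h1, cs.length_one] at hx; omega
      obtain ⟨i, hdesc⟩ := cs.exists_rightDescent_of_ne_one hne
      have hlen' : cs.length (x * cs.simple i) + 1 = cs.length x := cs.isRightDescent_iff.mp hdesc
      set x₀ := x * cs.simple i with hx₀
      have hx₀s : x₀ * cs.simple i = x := by rw [hx₀, cs.simple_mul_simple_cancel_right]
      have hasc : cs.length x₀ < cs.length (x₀ * cs.simple i) := by rw [hx₀s]; omega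
      have hTx : Tb x₀ * Tb (cs.simple i) = Tb x := by rw [hTmul_asc x₀ i hasc, hx₀s]
      have hr₀mem := ih (cs.length x₀) (by omega) x₀ rfl
      set r₀ := bar (Tb x₀) - (T (-(2 * (cs.length x₀ : ℤ))) : L) • Tb x₀ with hr₀def
      have hbar_x₀ : bar (Tb x₀) = (T (-(2 * (cs.length x₀ : ℤ))) : L) • Tb x₀ + r₀ := by
        rw [hr₀def]; abel
      have hTT : (T (-(2 * (cs.length x₀ : ℤ))) : L) * T (-2)
          = T (-(2 * (cs.length x : ℤ))) := by
        rw [← T_add]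
        congr 1
        have h1 : (cs.length x : ℤ) = (cs.length x₀ : ℤ) + 1 := by exact_mod_cast hlen'.symm
        omega
      have hexp : bar (Tb x) - (T (-(2 * (cs.length x : ℤ))) : L) • Tb x
          = (T (-2) : L) • (r₀ * Tb (cs.simple i))
            + ((T (-2) - 1 : L)) • ((T (-(2 * (cs.length x₀ : ℤ))) : L) • Tb x₀ + r₀) := by
        rw [← hTx, hbar_mul, hbar_simple i, hbar_x₀, hTx, ← hTT]
        simp only [add_mul, mul_add, smul_mul_assoc, mul_smul_comm, smul_smul, mul_one, hTx]
        module
      rw [hexp]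
      refine Submodule.add_mem _ (Submodule.smul_mem _ _ ?_) (Submodule.smul_mem _ _ ?_)
      · have := lowSpan_mul_simple cs Tb hTmul_asc hTmul_desc hr₀mem i
        exact lowSpan_mono cs Tb (by omega) this
      · refine Submodule.add_mem _ (Submodule.smul_mem _ _ (Tb_mem_lowSpan cs Tb (by omega))) ?_
        exact lowSpan_mono cs Tb (by omega) hr₀mem


end KLAux3

/-- If `w` is an element of a Coxeter group `W` and `s` is a simple reflection with
`ℓ(ws) < ℓ(w)`, then for every `y < w` in Bruhat order the Kazhdan–Lusztig
polynomials satisfy `P_{ys,w} = P_{y,w}`.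

The Kazhdan–Lusztig polynomials `P : W → W → ℤ[q]` are specified by their defining
properties inside the Hecke algebra `H` of `(W,S)` over `ℤ[v,v⁻¹]`: `H` has a basis
`{T_w}` with `T_1 = 1`, `T_w T_s = T_{ws}` when `ℓ(ws) > ℓ(w)`, and
`T_w T_s = (q−1) T_w + q T_{ws}` when `ℓ(ws) < ℓ(w)` (where `q = v²`); the bar
involution is the ring endomorphism with `v ↦ v⁻¹` and `T_s ↦ T_s⁻¹ = q⁻¹T_s + (q⁻¹−1)`;
and the `P_{x,w}` satisfy `P_{w,w} = 1`, `P_{x,w} = 0` unless `x ≤ w`,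
`deg P_{x,w} ≤ (ℓ(w)−ℓ(x)−1)/2` for `x < w`, and each element
`C'_w = v^{−ℓ(w)} ∑_{x} P_{x,w}(q) T_x` is bar-invariant. -/
theorem kl_polynomial_right_descent_invariance
    (H : Type*) [Ring H] [Algebra (LaurentPolynomial ℤ) H]
    (Tb : W → H)
    (hT1 : Tb 1 = 1)
    (hTindep : LinearIndependent (LaurentPolynomial ℤ) Tb)
    (hTmul_asc : ∀ (w : W) (i : B), cs.length w < cs.length (w * cs.simple i) →
      Tb w * Tb (cs.simple i) = Tb (w * cs.simple i))
    (hTmul_desc : ∀ (w : W) (i : B), cs.length (w * cs.simple i) < cs.length w →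
      Tb w * Tb (cs.simple i) =
        ((T 2 - 1 : LaurentPolynomial ℤ)) • Tb w +
          ((T 2 : LaurentPolynomial ℤ)) • Tb (w * cs.simple i))
    (bar : H → H)
    (hbar_add : ∀ x y : H, bar (x + y) = bar x + bar y)
    (hbar_mul : ∀ x y : H, bar (x * y) = bar x * bar y)
    (hbar_one : bar 1 = 1)
    (hbar_smul : ∀ (n : ℤ) (x : H),
      bar ((T n : LaurentPolynomial ℤ) • x) = (T (-n) : LaurentPolynomial ℤ) • bar x)
    (hbar_simple : ∀ i : B,
      bar (Tb (cs.simple i)) =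
        (T (-2) : LaurentPolynomial ℤ) • Tb (cs.simple i) +
          ((T (-2) - 1 : LaurentPolynomial ℤ)) • (1 : H))
    (P : W → W → Polynomial ℤ)
    (hPww : ∀ w : W, P w w = 1)
    (hPsupp : ∀ y w : W, ¬ BruhatLE cs y w → P y w = 0)
    (hPdeg : ∀ y w : W, BruhatLE cs y w → y ≠ w →
      2 * (P y w).natDegree + 1 ≤ (cs.length w : ℤ) - (cs.length y : ℤ))
    (hbarC : ∀ w : W,
      bar ((T (-(cs.length w : ℤ)) : LaurentPolynomial ℤ) •
          ∑ᶠ x : W, (Polynomial.aeval (T 2 : LaurentPolynomial ℤ) (P x w)) • Tb x) =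
        (T (-(cs.length w : ℤ)) : LaurentPolynomial ℤ) •
          ∑ᶠ x : W, (Polynomial.aeval (T 2 : LaurentPolynomial ℤ) (P x w)) • Tb x)
    (w : W) (i : B) (hdesc : cs.length (w * cs.simple i) < cs.length w)
    (y : W) (hy : BruhatLE cs y w) (hyw : y ≠ w) :
    P (y * cs.simple i) w = P y w := by
  classical
  set s0 : W := cs.simple i with hs0
  set lw : ℤ := (cs.length w : ℤ) with hlw
  set a : W → LaurentPolynomial ℤ :=
    fun x => Polynomial.aeval (T 2 : LaurentPolynomial ℤ) (P x w) with ha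
  -- finiteness of the Bruhat interval
  have hfin : {x : W | BruhatLE cs x w}.Finite :=
    KLAux2.bruhatLE_finite cs (cs.length w) w le_rfl
  set F : Finset W := hfin.toFinset with hF
  have hmemF : ∀ x : W, x ∈ F ↔ BruhatLE cs x w := fun x => Set.Finite.mem_toFinset _
  set G : Finset W := F ∪ F.image (fun x => x * s0) with hG
  have hFG : F ⊆ G := Finset.subset_union_left
  have hss : ∀ x : W, x * s0 * s0 = x := fun x => cs.simple_mul_simple_cancel_right i
  have hGs : ∀ x ∈ G, x * s0 ∈ G := by
    intro x hx
    rw [hG, Finset.mem_union] at hx ⊢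
    rcases hx with hx | hx
    · right; exact Finset.mem_image_of_mem _ hx
    · left
      obtain ⟨z, hz, rfl⟩ := Finset.mem_image.mp hx
      rw [hss]; exact hz
  have haB : ∀ x : W, a x = Polynomial.aeval (T 2 : LaurentPolynomial ℤ) (P x w) :=
    fun _ => rfl
  have haF : ∀ x : W, x ∉ F → a x = 0 := by
    intro x hx
    have hnb : ¬ BruhatLE cs x w := fun hb => hx ((hmemF x).mpr hb)
    rw [haB, hPsupp x w hnb, map_zero]
  have hdich : ∀ x : W, cs.length (x * s0) < cs.length x ∨ cs.length x < cs.length (x * s0) := by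
    intro x
    rcases cs.length_mul_simple x i with h | h <;> rw [← hs0] at h
    · right; omega
    · left; omega
  have hmul_asc : ∀ x : W, cs.length x < cs.length (x * s0) → Tb x * Tb s0 = Tb (x * s0) :=
    fun x hx => hTmul_asc x i hx
  have hmul_desc : ∀ x : W, cs.length (x * s0) < cs.length x →
      Tb x * Tb s0 = ((T 2 - 1 : LaurentPolynomial ℤ)) • Tb x
        + ((T 2 : LaurentPolynomial ℤ)) • Tb (x * s0) :=
    fun x hx => hTmul_desc x i hx
  set X : H := ∑ x ∈ G, a x • Tb x with hX
  have hXfinsum : ∑ᶠ x : W, a x • Tb x = X := by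
    refine finsum_eq_sum_of_support_subset _ ?_
    intro x hx
    by_contra hxG
    apply hx
    have hxF : x ∉ F := fun hxF => hxG (hFG hxF)
    show a x • Tb x = 0
    rw [haF x hxF, zero_smul]
  have hbar_sub : ∀ x y : H, bar (x - y) = bar x - bar y := fun x y =>
    map_sub (AddMonoidHom.mk' bar hbar_add) x y
  have hbarC' : bar ((T (-(cs.length w : ℤ)) : LaurentPolynomial ℤ) •
      ∑ᶠ x : W, a x • Tb x) = (T (-(cs.length w : ℤ)) : LaurentPolynomial ℤ) •
      ∑ᶠ x : W, a x • Tb x := hbarC w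
  rw [hXfinsum] at hbarC'
  have hbarX : bar X = (T (-(2 * lw)) : LaurentPolynomial ℤ) • X := by
    have h1 := hbar_smul (-(cs.length w : ℤ)) X
    rw [neg_neg, hbarC'] at h1
    have h3 : (T (-lw) : LaurentPolynomial ℤ) • ((T lw : LaurentPolynomial ℤ) • bar X)
        = (T (-lw) : LaurentPolynomial ℤ) • ((T (-lw) : LaurentPolynomial ℤ) • X) := by
      rw [h1]
    rw [smul_smul, smul_smul, ← T_add, ← T_add, show -lw + lw = 0 by ring, T_zero, one_smul,
      show -lw + -lw = -(2 * lw) by ring] at h3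
    exact h3
  set e : W → LaurentPolynomial ℤ := fun x =>
    if cs.length (x * s0) < cs.length x then a (x * s0) - a x
    else T 2 * (a (x * s0) - a x) with he
  have heB : ∀ x : W, e x = if cs.length (x * s0) < cs.length x then a (x * s0) - a x
      else T 2 * (a (x * s0) - a x) := fun _ => rfl
  set Z : H := X * (Tb s0 + 1) - ((1 + T 2 : LaurentPolynomial ℤ)) • X with hZdef
  -- expansion of Z in the Tb basis
  have hZsum : Z = ∑ x ∈ G, e x • Tb x := by
    have hXmul : X * (Tb s0 + 1)
        = (∑ x ∈ G, ((if cs.length (x * s0) < cs.length x then a x * (T 2 - 1) else 0)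
              • Tb x
            + (if cs.length (x * s0) < cs.length x then a x * T 2 else a x) • Tb (x * s0)))
          + ∑ x ∈ G, a x • Tb x := by
      rw [hX, Finset.sum_mul, ← Finset.sum_add_distrib]
      refine Finset.sum_congr rfl fun x hx => ?_
      rw [mul_add, mul_one, smul_mul_assoc]
      by_cases hd : cs.length (x * s0) < cs.length x
      · rw [hmul_desc x hd, if_pos hd, if_pos hd, smul_add, smul_smul, smul_smul,
          mul_comm (a x) (T 2)]
      · have hd' : cs.length x < cs.length (x * s0) := (hdich x).resolve_left hd
        rw [hmul_asc x hd', if_neg hd, if_neg hd, zero_smul, zero_add]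
    have hsplit : (∑ x ∈ G, ((if cs.length (x * s0) < cs.length x
            then a x * (T 2 - 1) else 0) • Tb x
          + (if cs.length (x * s0) < cs.length x then a x * T 2 else a x) • Tb (x * s0)))
        = (∑ x ∈ G, (if cs.length (x * s0) < cs.length x then a x * (T 2 - 1) else 0) • Tb x)
          + ∑ x ∈ G, (if cs.length (x * s0) < cs.length x then a x * T 2 else a x)
              • Tb (x * s0) := Finset.sum_add_distrib
    have hreindex : (∑ x ∈ G, (if cs.length (x * s0) < cs.length x then a x * T 2 else a x)
            • Tb (x * s0))
        = ∑ x ∈ G, (if cs.length (x * s0 * s0) < cs.length (x * s0) then a (x * s0) * T 2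
            else a (x * s0)) • Tb x := by
      refine Finset.sum_nbij' (fun x => x * s0) (fun x => x * s0)
        (fun x hx => hGs x hx) (fun x hx => hGs x hx)
        (fun x _ => hss x) (fun x _ => hss x) ?_
      intro x hx
      simp only [hss]
    rw [hZdef, hXmul, hsplit, hreindex, hX, Finset.smul_sum,
      ← Finset.sum_add_distrib, ← Finset.sum_add_distrib, ← Finset.sum_sub_distrib]
    refine Finset.sum_congr rfl fun x hx => ?_
    simp only [hss, smul_smul]
    rcases hdich x with hd | hd
    · rw [heB]
      rw [if_pos hd, if_pos hd, if_neg (by omega : ¬ cs.length x < cs.length (x * s0)),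
        ← add_smul, ← add_smul, ← sub_smul]
      congr 1
      ring
    · rw [heB]
      rw [if_neg (by omega : ¬ cs.length (x * s0) < cs.length x),
        if_neg (by omega : ¬ cs.length (x * s0) < cs.length x),
        if_pos hd, ← add_smul, ← add_smul, ← sub_smul]
      congr 1
      ring
  -- bar of Z
  have hbarTbs1 : bar (Tb s0 + 1) = (T (-2) : LaurentPolynomial ℤ) • (Tb s0 + 1) := by
    calc bar (Tb s0 + 1)
        = (T (-2) : LaurentPolynomial ℤ) • Tb s0
            + (((T (-2) - 1 : LaurentPolynomial ℤ)) • (1 : H) + 1) := by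
          rw [hbar_add, hbar_simple i, hbar_one, add_assoc]
      _ = (T (-2) : LaurentPolynomial ℤ) • Tb s0
            + (T (-2) : LaurentPolynomial ℤ) • (1 : H) := by
          congr 1
          rw [sub_smul, one_smul]
          abel
      _ = (T (-2) : LaurentPolynomial ℤ) • (Tb s0 + 1) := (smul_add _ _ _).symm
  have hbarZ : bar Z = (T (-(2 * lw) + -2) : LaurentPolynomial ℤ) • Z := by
    have hY : bar (X * (Tb s0 + 1))
        = (T (-(2 * lw) + -2) : LaurentPolynomial ℤ) • (X * (Tb s0 + 1)) := by
      rw [hbar_mul, hbarX, hbarTbs1, smul_mul_assoc, mul_smul_comm, smul_smul, ← T_add]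
    have hX2 : bar (((1 + T 2 : LaurentPolynomial ℤ)) • X)
        = (T (-(2 * lw) + -2) : LaurentPolynomial ℤ)
            • (((1 + T 2 : LaurentPolynomial ℤ)) • X) := by
      rw [KLAux3.bar_smul_L bar hbar_add hbar_smul, hbarX, smul_smul, smul_smul]
      congr 1
      rw [map_add, map_one, invert_T]
      rw [add_mul, one_mul, mul_add, mul_one, ← T_add, ← T_add]
      rw [show (-2 : ℤ) + -(2 * lw) = (-(2 * lw) + -2) by ring,
        show (-(2 * lw) + -2) + 2 = -(2 * lw) by ring]
      ring
    rw [hZdef, hbar_sub, hY, hX2, smul_sub]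
  -- coefficients vanish
  set dc : W → LaurentPolynomial ℤ := fun x =>
    (T (-(2 * lw) + -2) : LaurentPolynomial ℤ) * e x
      - invert (e x) * (T (-(2 * (cs.length x : ℤ))) : LaurentPolynomial ℤ) with hdc
  set S : Finset W := G.filter (fun x => e x ≠ 0) with hSdef
  have hrmem := KLAux3.bar_Tb_expansion cs Tb hT1 hTmul_asc hTmul_desc bar hbar_mul
    hbar_one hbar_simple
  have hSempty : S = ∅ := by
    by_contra hSne
    obtain ⟨x₀, hx₀S, hx₀max⟩ := Finset.exists_max_image S (fun x => cs.length x)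
      (Finset.nonempty_of_ne_empty hSne)
    have hx₀G : x₀ ∈ G := (Finset.mem_filter.mp hx₀S).1
    have hex₀ : e x₀ ≠ 0 := (Finset.mem_filter.mp hx₀S).2
    -- the maximal element has a descent
    have hdesc₀ : cs.length (x₀ * s0) < cs.length x₀ := by
      rcases hdich x₀ with h | h
      · exact h
      exfalso
      have hd1 : a (x₀ * s0) - a x₀ ≠ 0 := by
        intro h0
        apply hex₀
        rw [heB, if_neg (by omega : ¬ cs.length (x₀ * s0) < cs.length x₀), h0, mul_zero]
      have hesx : e (x₀ * s0) ≠ 0 := by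
        rw [heB]
        simp only [hss]
        rw [if_pos h]
        intro h0
        rw [sub_eq_zero] at h0
        exact hd1 (by rw [sub_eq_zero, h0])
      have hmemS : x₀ * s0 ∈ S := Finset.mem_filter.mpr ⟨hGs x₀ hx₀G, hesx⟩
      have := hx₀max _ hmemS
      omega
    -- extraction of the x₀ coefficient
    set N := cs.length x₀ with hN
    have hmmem : (∑ x ∈ G, invert (e x) •
        (bar (Tb x) - (T (-(2 * (cs.length x : ℤ))) : LaurentPolynomial ℤ) • Tb x))
        ∈ KLAux3.lowSpan cs Tb N := by
      apply Submodule.sum_mem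
      intro x hxG
      by_cases hex : e x = 0
      · rw [hex, map_zero, zero_smul]; exact Submodule.zero_mem _
      · have hxS : x ∈ S := Finset.mem_filter.mpr ⟨hxG, hex⟩
        exact KLAux3.lowSpan_mono cs Tb (hx₀max x hxS)
          (Submodule.smul_mem _ _ (hrmem x))
    have hbar_sum : ∀ (f : W → H), bar (∑ x ∈ G, f x) = ∑ x ∈ G, bar (f x) := fun f =>
      map_sum (AddMonoidHom.mk' bar hbar_add) f G
    have hbarZ2 : bar Z = ∑ x ∈ G, invert (e x) • bar (Tb x) := by
      rw [hZsum, hbar_sum]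
      refine Finset.sum_congr rfl fun x hx => ?_
      exact KLAux3.bar_smul_L bar hbar_add hbar_smul (e x) (Tb x)
    have hkey : (∑ x ∈ G, dc x • Tb x) = ∑ x ∈ G, invert (e x) •
        (bar (Tb x) - (T (-(2 * (cs.length x : ℤ))) : LaurentPolynomial ℤ) • Tb x) := by
      have e1 : (T (-(2 * lw) + -2) : LaurentPolynomial ℤ) • Z
          = ∑ x ∈ G, ((T (-(2 * lw) + -2) : LaurentPolynomial ℤ) * e x) • Tb x := by
        rw [hZsum, Finset.smul_sum]
        simp only [smul_smul]
      have e2 : bar Z = (∑ x ∈ G, (invert (e x)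
            * (T (-(2 * (cs.length x : ℤ))) : LaurentPolynomial ℤ)) • Tb x)
          + ∑ x ∈ G, invert (e x) •
            (bar (Tb x) - (T (-(2 * (cs.length x : ℤ))) : LaurentPolynomial ℤ) • Tb x) := by
        rw [hbarZ2, ← Finset.sum_add_distrib]
        refine Finset.sum_congr rfl fun x hx => ?_
        rw [smul_sub, smul_smul]
        abel
      have e3 : (∑ x ∈ G, dc x • Tb x)
          = (∑ x ∈ G, ((T (-(2 * lw) + -2) : LaurentPolynomial ℤ) * e x) • Tb x)
            - ∑ x ∈ G, (invert (e x)
              * (T (-(2 * (cs.length x : ℤ))) : LaurentPolynomial ℤ)) • Tb x := by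
        rw [← Finset.sum_sub_distrib]
        refine Finset.sum_congr rfl fun x hx => ?_
        rw [show dc x = (T (-(2 * lw) + -2) : LaurentPolynomial ℤ) * e x
          - invert (e x) * (T (-(2 * (cs.length x : ℤ))) : LaurentPolynomial ℤ) from rfl,
          sub_smul]
      rw [e3, ← e1, hbarZ.symm, e2]
      abel
    have hspan : (∑ x ∈ G, dc x • Tb x)
        ∈ Submodule.span (LaurentPolynomial ℤ) (Tb '' {u : W | cs.length u < N}) := by
      rw [hkey]
      exact hmmem
    obtain ⟨l₀, hl₀supp, hl₀eq⟩ :=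
      (Finsupp.mem_span_image_iff_linearCombination (LaurentPolynomial ℤ)).mp hspan
    have hl₁ : Finsupp.linearCombination (LaurentPolynomial ℤ) Tb
        (∑ x ∈ G, Finsupp.single x (dc x)) = ∑ x ∈ G, dc x • Tb x := by
      rw [map_sum]
      exact Finset.sum_congr rfl fun x _ => Finsupp.linearCombination_single _ _ _
    have heq0 : (∑ x ∈ G, Finsupp.single x (dc x)) - l₀ = 0 := by
      apply linearIndependent_iff.mp hTindep
      rw [map_sub, hl₁, hl₀eq, sub_self]
    have hl : (∑ x ∈ G, Finsupp.single x (dc x)) = l₀ := sub_eq_zero.mp heq0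
    have hl₀x₀ : l₀ x₀ = 0 := by
      by_contra h0
      have hmem : x₀ ∈ l₀.support := Finsupp.mem_support_iff.mpr h0
      have := (Finsupp.mem_supported (LaurentPolynomial ℤ) l₀).mp hl₀supp hmem
      simp only [Set.mem_setOf_eq] at this
      omega
    have hdc0 : dc x₀ = 0 := by
      have hval : (∑ x ∈ G, Finsupp.single x (dc x)) x₀ = dc x₀ := by
        rw [Finsupp.finset_sum_apply]
        simp only [Finsupp.single_apply]
        rw [Finset.sum_ite_eq' G x₀ dc]
        exact if_pos hx₀G
      rw [← hval, hl, hl₀x₀]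
    -- the Laurent-degree contradiction
    have hfx : e x₀ = a (x₀ * s0) - a x₀ := by
      rw [heB, if_pos hdesc₀]
    have hlen₀' := cs.length_mul_simple x₀ i
    rw [← hs0] at hlen₀'
    have hlen₀ : cs.length (x₀ * s0) + 1 = cs.length x₀ := hlen₀'.resolve_left (by omega)
    have haz : ∀ z : W, z ≠ w → ∀ n : ℤ, (a z).coeff n ≠ 0 →
        0 ≤ n ∧ n + 1 ≤ lw - (cs.length z : ℤ) := by
      intro z hzw n hn
      have hPz : P z w ≠ 0 := by
        intro h0
        apply hn
        rw [haB, h0, map_zero]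
        rfl
      have hbz : BruhatLE cs z w := by
        by_contra hb
        exact hPz (hPsupp z w hb)
      have hdeg := hPdeg z w hbz hzw
      have hsp := KLAux.aeval_T2_supp (P z w) n hn
      exact ⟨hsp.1, by omega⟩
    have hsupp : ∀ n : ℤ, (e x₀).coeff n ≠ 0 → 0 ≤ n ∧ n ≤ lw - (cs.length x₀ : ℤ) := by
      intro n hn
      rw [hfx, AddMonoidAlgebra.coeff_sub, Finsupp.sub_apply] at hn
      have hone : (a (x₀ * s0)).coeff n ≠ 0 ∨ (a x₀).coeff n ≠ 0 := by
        by_contra hc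
        push_neg at hc
        rw [hc.1, hc.2, sub_zero] at hn
        exact hn rfl
      have hxsw : x₀ * s0 ≠ w := by
        intro hcontr
        have h1 : cs.length (x₀ * s0) = cs.length w := by rw [hcontr]
        have h2 : x₀ = w * s0 := by rw [← hcontr, hss]
        have h3 : cs.length x₀ = cs.length (w * s0) := by rw [h2]
        omega
      rcases hone with h1 | h1
      · have := haz (x₀ * s0) hxsw n h1
        constructor
        · exact this.1
        · have h2 : (cs.length (x₀ * s0) : ℤ) + 1 = (cs.length x₀ : ℤ) := by
            exact_mod_cast hlen₀
          omega
      · by_cases hx₀w : x₀ = w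
        · subst hx₀w
          have ha1 : a x₀ = 1 := by
            rw [haB, hPww x₀, map_one]
          rw [ha1] at h1
          have hn0 : n = 0 := by
            by_contra hne
            apply h1
            rw [← T_zero, T_apply]
            exact if_neg (fun hh => hne hh.symm)
          rw [hn0]
          simp [hlw]
        · have := haz x₀ hx₀w n h1
          omega
    have heqf : (T (-(2 * lw) + -2) : LaurentPolynomial ℤ) * e x₀
        = invert (e x₀) * (T (-(2 * (cs.length x₀ : ℤ))) : LaurentPolynomial ℤ) := by
      exact sub_eq_zero.mp hdc0
    have hstar : ∀ n : ℤ, (e x₀).coeff (n + (2 * lw + 2)) = (e x₀).coeff (-n - 2 * (cs.length x₀ : ℤ)) := by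
      intro n
      have h1 := congrArg (fun g : LaurentPolynomial ℤ => g.coeff n) heqf
      rw [KLAux.T_mul_apply, KLAux.mul_T_apply] at h1
      rw [invert_apply] at h1
      rw [show n - (-(2 * lw) + -2) = n + (2 * lw + 2) by ring] at h1
      rw [show -(n - -(2 * (cs.length x₀ : ℤ))) = -n - 2 * (cs.length x₀ : ℤ) by ring] at h1
      exact h1
    have hfne : (e x₀).coeff.support.Nonempty :=
      Finsupp.support_nonempty_iff.mpr (mt AddMonoidAlgebra.coeff_eq_zero.mp hex₀)
    set n₀ := (e x₀).coeff.support.max' hfne with hn₀def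
    have hn₀ : (e x₀).coeff n₀ ≠ 0 := Finsupp.mem_support_iff.mp (Finset.max'_mem _ _)
    have hb := hsupp n₀ hn₀
    have h2 := hstar (n₀ - (2 * lw + 2))
    rw [show n₀ - (2 * lw + 2) + (2 * lw + 2) = n₀ by ring] at h2
    have hmem2 : (-(n₀ - (2 * lw + 2)) - 2 * (cs.length x₀ : ℤ)) ∈ (e x₀).coeff.support := by
      rw [Finsupp.mem_support_iff, ← h2]
      exact hn₀
    have hle := Finset.le_max' _ _ hmem2
    rw [← hn₀def] at hle
    omega
  -- conclusion
  have he0 : ∀ x ∈ G, e x = 0 := by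
    intro x hx
    by_contra hne
    have : x ∈ S := Finset.mem_filter.mpr ⟨hx, hne⟩
    rw [hSempty] at this
    exact absurd this (Finset.notMem_empty x)
  have hyG : y ∈ G := hFG ((hmemF y).mpr hy)
  have hey := he0 y hyG
  rw [heB] at hey
  have haa : a (y * s0) = a y := by
    by_cases hd : cs.length (y * s0) < cs.length y
    · rw [if_pos hd] at hey
      exact sub_eq_zero.mp hey
    · rw [if_neg hd] at hey
      have := KLAux.T2_mul_cancel (a (y * s0) - a y) 0 (by rw [hey, mul_zero])
      exact sub_eq_zero.mp this
  exact KLAux.aeval_T2_injective (P (y * cs.simple i) w) (P y w) haa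

end
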